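/- Let k be a field and let A be the 2-dimensional k-vector space with basis {x, y}. Let Δ : A → A ⊗ A be the linear map with Δx = 0 and Δy = y⊗y. Then for each of the following two multiplication tables (with parameter b ∈ k, resp. c ∈ k): (i) x² = 0, xy = 0, yx = bx, y² = 0; (ii) x² = 0, xy = cx, yx = 0, y² = y, the map Δ is coassociative, Δ(ab) = Δ(a)Δ(b) for all a, b ∈ A, and the self-distributivity identity holds: for all a, b ∈ A, (a·b)·y = (a·y)·(b·y) and (a·b)·x = 0. -/

import Mathlib

open TensorProduct in
/-- With comultiplication `Δx = 0, Δy = y⊗y`, each of the two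
multiplication tables (i) `x² = 0, xy = 0, yx = b•x, y² = 0` and
(ii) `x² = 0, xy = c•x, yx = 0, y² = y` yields a (non-counital)
self-distributive bialgebra. -/
theorem stmt_11 (k A : Type*) [Field k] (b c : k)
    [NonUnitalNonAssocRing A] [Module k A]
    [SMulCommClass k A A] [IsScalarTower k A A]
    (B : Module.Basis (Fin 2) k A) (x y : A) (hx : x = B 0) (hy : y = B 1)
    (Δ : A →ₗ[k] A ⊗[k] A)
    (hΔx : Δ x = 0) (hΔy : Δ y = y ⊗ₜ[k] y) :
    ((x * x = 0 ∧ x * y = 0 ∧ y * x = b • x ∧ y * y = 0) →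
      ((TensorProduct.assoc k A A A).toLinearMap ∘ₗ Δ.rTensor A ∘ₗ Δ = Δ.lTensor A ∘ₗ Δ)
      ∧ (∀ u v : A, Δ (u * v) = Δ u * Δ v)
      ∧ (∀ u v : A, (u * v) * y = (u * y) * (v * y) ∧ (u * v) * x = 0)) ∧
    ((x * x = 0 ∧ x * y = c • x ∧ y * x = 0 ∧ y * y = y) →
      ((TensorProduct.assoc k A A A).toLinearMap ∘ₗ Δ.rTensor A ∘ₗ Δ = Δ.lTensor A ∘ₗ Δ)
      ∧ (∀ u v : A, Δ (u * v) = Δ u * Δ v)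
      ∧ (∀ u v : A, (u * v) * y = (u * y) * (v * y) ∧ (u * v) * x = 0)) := by
  -- decomposition of an arbitrary element
  have hrep : ∀ u : A, u = (B.repr u 0) • x + (B.repr u 1) • y := by
    intro u
    rw [hx, hy]
    conv_lhs => rw [← B.sum_repr u]
    rw [Fin.sum_univ_two]
  -- coassociativity (independent of the multiplication)
  have hcoassoc :
      (TensorProduct.assoc k A A A).toLinearMap ∘ₗ Δ.rTensor A ∘ₗ Δ = Δ.lTensor A ∘ₗ Δ := by
    apply B.ext
    intro i
    fin_cases i
    · simp [← hx, hΔx]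
    · simp [← hy, hΔy, hΔx]
  constructor
  · rintro ⟨h1, h2, h3, h4⟩
    refine ⟨hcoassoc, ?_, ?_⟩
    · intro u v
      rw [hrep u, hrep v]
      set p := B.repr u 0; set q := B.repr u 1
      set r := B.repr v 0; set s := B.repr v 1
      simp [mul_add, add_mul, smul_mul_assoc, mul_smul_comm, h1, h2, h3, h4,
        smul_smul, map_add, map_smul, hΔx, hΔy, Algebra.TensorProduct.tmul_mul_tmul,
        smul_tmul', tmul_smul]
    · intro u v
      rw [hrep u, hrep v]
      set p := B.repr u 0; set q := B.repr u 1
      set r := B.repr v 0; set s := B.repr v 1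
      constructor <;>
        simp [mul_add, add_mul, smul_mul_assoc, mul_smul_comm, h1, h2, h3, h4, smul_smul]
  · rintro ⟨h1, h2, h3, h4⟩
    refine ⟨hcoassoc, ?_, ?_⟩
    · intro u v
      rw [hrep u, hrep v]
      set p := B.repr u 0; set q := B.repr u 1
      set r := B.repr v 0; set s := B.repr v 1
      simp [mul_add, add_mul, smul_mul_assoc, mul_smul_comm, h1, h2, h3, h4,
        smul_smul, map_add, map_smul, hΔx, hΔy, Algebra.TensorProduct.tmul_mul_tmul,
        smul_tmul', tmul_smul]
    · intro u v
      rw [hrep u, hrep v]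
      set p := B.repr u 0; set q := B.repr u 1
      set r := B.repr v 0; set s := B.repr v 1
      constructor <;>
        simp [mul_add, add_mul, smul_mul_assoc, mul_smul_comm, h1, h2, h3, h4, smul_smul,
          mul_comm, mul_left_comm]
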